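/- arXiv:2002.01823 — 2 statements merged into one kernel-verified Lean document; each statement's English description precedes it below -/
import Mathlib

section
/- With z = θ̂ + β(i) − θ, θ constant, and dynamics θ̂' = −(∂β/∂i)(i)·[L⁻¹Ωᵀ(i)(θ̂+β(i)) + L⁻¹u − ω̂ J i], and current dynamics i' = L⁻¹Ωᵀ(i)θ + L⁻¹u − ω̂ J i, with ∂β/∂i = k_z Ω(i), it holds z' = −(k_z/L) Ω(i)Ωᵀ(i) z. -/
open Matrix

def matJ : Matrix (Fin 2) (Fin 2) ℝ := !![0, -1; 1, 0]

/-- The regressor matrix Ω(i) ∈ ℝ^{3×2}, with Ω(i)ᵀ = (−i  I₂). -/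
def Omat (i : Fin 2 → ℝ) : Matrix (Fin 3) (Fin 2) ℝ := !![-(i 0), -(i 1); 1, 0; 0, 1]

/-- The I&I shaping map β(i) = k_z(−|i|²/2, i₁, i₂). -/
noncomputable def betaMap (kz : ℝ) (i : Fin 2 → ℝ) : Fin 3 → ℝ :=
  ![kz * (-((i 0) ^ 2 + (i 1) ^ 2) / 2), kz * i 0, kz * i 1]

/-- The I&I estimation error z = θ̂ + β(i) − θ obeys the gradient-descent flow
z' = −(k_z/L) Ω(i)Ω(i)ᵀ z. -/
theorem IandI_error_dynamics (L kz : ℝ) (hL : 0 < L) (hkz : 0 < kz)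
    (θ : Fin 3 → ℝ) (θhat : ℝ → Fin 3 → ℝ) (i u : ℝ → Fin 2 → ℝ) (ωhat : ℝ → ℝ)
    (hi : ∀ t : ℝ, HasDerivAt i
      ((1 / L) • (Omat (i t))ᵀ.mulVec θ + (1 / L) • u t - ωhat t • matJ.mulVec (i t)) t)
    (hθhat : ∀ t : ℝ, HasDerivAt θhat
      (-(kz • Omat (i t)).mulVec
        ((1 / L) • (Omat (i t))ᵀ.mulVec (θhat t + betaMap kz (i t)) + (1 / L) • u t -
          ωhat t • matJ.mulVec (i t))) t) :
    ∀ t : ℝ, HasDerivAt (fun t => θhat t + betaMap kz (i t) - θ)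
      (-((kz / L) • (Omat (i t) * (Omat (i t))ᵀ)).mulVec
        (θhat t + betaMap kz (i t) - θ)) t := by
  intro t
  set v : Fin 2 → ℝ :=
    (1 / L) • (Omat (i t))ᵀ.mulVec θ + (1 / L) • u t - ωhat t • matJ.mulVec (i t) with hv
  have hcomp : ∀ j, HasDerivAt (fun s => i s j) (v j) t :=
    fun j => hasDerivAt_pi.mp (hi t) j
  have hbeta : HasDerivAt (fun s => betaMap kz (i s))
      ((kz • Omat (i t)).mulVec v) t := by
    rw [hasDerivAt_pi]
    intro j
    fin_cases j
    · have h0 := ((hcomp 0).pow 2).add ((hcomp 1).pow 2)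
      have := ((h0.neg.div_const 2).const_mul kz)
      convert this using 1
      · rfl
      all_goals simp [Omat, mulVec, dotProduct, Fin.sum_univ_two, betaMap]
      ring
    · have := (hcomp 0).const_mul kz
      convert this using 1
      · rfl
      all_goals simp [Omat, mulVec, dotProduct, Fin.sum_univ_two, betaMap]
    · have := (hcomp 1).const_mul kz
      convert this using 1
      · rfl
      all_goals simp [Omat, mulVec, dotProduct, Fin.sum_univ_two, betaMap]
  have htot := ((hθhat t).add hbeta).sub_const θ
  convert htot using 1
  · rfl
  · rfl
  · rfl
  · rfl
  simp only [hv, mulVec_add, mulVec_sub, Matrix.mulVec_smul, smul_mulVec,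
    neg_mulVec, ← mulVec_mulVec, smul_smul]
  module
end

section
/- Let η ∈ S¹ evolve as η' = (χ ξ̃ − k χ η₂) J η and ξ̃' = −γ χ η₂, with χ(t) ∈ [χ_m, χ_M], χ_m > 0, and k, γ > 0. Then the function V(η, ξ̃) = γ(1 − η₁) + ξ̃²/2 satisfies V' = −k γ χ η₂² ≤ 0 along trajectories; in particular V is nonincreasing and the set {η₂ = 0} contains all points where V' = 0. -/
/-- Lyapunov analysis of the reduced-order attitude observer error system on
S¹ × ℝ: V = γ(1 − η₁) + ξ̃²/2 satisfies V' = −kγχη₂² ≤ 0, so V is nonincreasing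
and V' vanishes only where η₂ = 0. -/
theorem attitude_observer_lyapunov (k γ χm χM : ℝ) (hk : 0 < k) (hγ : 0 < γ)
    (hχm : 0 < χm) (χ : ℝ → ℝ) (hχ : ∀ t : ℝ, χm ≤ χ t ∧ χ t ≤ χM)
    (η : ℝ → Fin 2 → ℝ) (ξtil : ℝ → ℝ)
    (hS : ∀ t : ℝ, (η t 0) ^ 2 + (η t 1) ^ 2 = 1)
    (hη : ∀ t : ℝ, HasDerivAt η
      ((χ t * ξtil t - k * χ t * η t 1) • matJ.mulVec (η t)) t)
    (hξ : ∀ t : ℝ, HasDerivAt ξtil (-(γ * χ t * η t 1)) t) :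
    (∀ t : ℝ, HasDerivAt (fun t => γ * (1 - η t 0) + (ξtil t) ^ 2 / 2)
        (-(k * γ * χ t * (η t 1) ^ 2)) t) ∧
    (∀ t : ℝ, -(k * γ * χ t * (η t 1) ^ 2) ≤ 0) ∧
    (∀ s t : ℝ, s ≤ t →
      γ * (1 - η t 0) + (ξtil t) ^ 2 / 2 ≤ γ * (1 - η s 0) + (ξtil s) ^ 2 / 2) ∧
    (∀ t : ℝ, -(k * γ * χ t * (η t 1) ^ 2) = 0 → η t 1 = 0) := by
  have hχpos : ∀ t, 0 < χ t := fun t => lt_of_lt_of_le hχm (hχ t).1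
  have hη0 : ∀ t : ℝ, HasDerivAt (fun t => η t 0)
      (-((χ t * ξtil t - k * χ t * η t 1) * η t 1)) t := by
    intro t
    have h := (hasDerivAt_pi.mp (hη t)) 0
    have : ((χ t * ξtil t - k * χ t * η t 1) • matJ.mulVec (η t)) 0
        = -((χ t * ξtil t - k * χ t * η t 1) * η t 1) := by
      simp [matJ, Matrix.mulVec, dotProduct, Fin.sum_univ_two]
    rwa [this] at h
  have hV : ∀ t : ℝ, HasDerivAt (fun t => γ * (1 - η t 0) + (ξtil t) ^ 2 / 2)
      (-(k * γ * χ t * (η t 1) ^ 2)) t := by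
    intro t
    have h1 := ((hasDerivAt_const t (1:ℝ)).sub (hη0 t)).const_mul γ
    have h2 := ((hξ t).pow 2).div_const 2
    have := h1.add h2
    refine this.congr_deriv ?_
    ring
  refine ⟨hV, ?_, ?_, ?_⟩
  · intro t
    have := mul_nonneg (mul_nonneg (mul_nonneg hk.le hγ.le) (hχpos t).le)
      (sq_nonneg (η t 1))
    linarith
  · intro s t hst
    have hanti : Antitone (fun t => γ * (1 - η t 0) + (ξtil t) ^ 2 / 2) := by
      apply antitone_of_deriv_nonpos
      · intro x
        exact (hV x).differentiableAt
      · intro x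
        rw [(hV x).deriv]
        have := mul_nonneg (mul_nonneg (mul_nonneg hk.le hγ.le) (hχpos x).le)
          (sq_nonneg (η x 1))
        linarith
    exact hanti hst
  · intro t h
    have hkgc : 0 < k * γ * χ t := mul_pos (mul_pos hk hγ) (hχpos t)
    have : (η t 1) ^ 2 = 0 := by
      by_contra hne
      have := mul_pos hkgc (lt_of_le_of_ne (sq_nonneg _) (Ne.symm hne))
      linarith
    exact pow_eq_zero_iff (n := 2) (by norm_num) |>.mp this
end
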